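/- Let (R, m) be a commutative Noetherian local ring of prime characteristic p > 2, I an ideal of R with I ≠ R, and S = S(1) the pseudocanonical cover of R via f = 1. Let x ∈ I be a nonzerodivisor on R and x₂, …, x_d ∈ R such that x, x₂, …, x_d is a regular sequence on R; set J = (x, x₂, …, x_d)R and assume R/J has finite length. Let z ∈ R with z ∉ I + (x₂, …, x_d)R and u ∈ I with u − x·z ∈ J·I. Assume: (i) m·u ⊆ J·I; (ii) every b ∈ I with m·b ⊆ J·I satisfies b ∈ R·u + J·I; (iii) every a ∈ R with a·I ⊆ J·I satisfies a ∈ J; and (iv) for every w ∈ R and every e ≥ 0, w^{p^e} ∈ I + (x₂^{p^e}, …, x_d^{p^e})R implies w ∈ I + (x₂, …, x_d)R. Then the ideal JS of S is Frobenius closed: every s ∈ S with s^{p^e} ∈ (JS)^[p^e] for some e ≥ 0 lies in JS. -/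

import Mathlib

open Polynomial

/-- The set `{a + b·t : a ∈ R, b ∈ I}` inside `A = R[T]/(T² − f)`. -/
def pccSet {R : Type*} [CommRing R] (I : Ideal R) (f : R) :
    Set (AdjoinRoot (X ^ 2 - C f)) :=
  {x | ∃ a b : R, b ∈ I ∧
    x = algebraMap R (AdjoinRoot (X ^ 2 - C f)) a +
        algebraMap R (AdjoinRoot (X ^ 2 - C f)) b * AdjoinRoot.root (X ^ 2 - C f)}

/-- The pseudocanonical cover `S(f) = R + It` of `R` via `f`, as a subring of
`A = R[T]/(T² − f)`. -/
noncomputable def pcc {R : Type*} [CommRing R] (I : Ideal R) (f : R) :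
    Subring (AdjoinRoot (X ^ 2 - C f)) where
  carrier := pccSet I f
  one_mem' := ⟨1, 0, I.zero_mem, by simp⟩
  zero_mem' := ⟨0, 0, I.zero_mem, by simp⟩
  add_mem' := by
    rintro x y ⟨a, b, hb, rfl⟩ ⟨c, d, hd, rfl⟩
    exact ⟨a + c, b + d, I.add_mem hb hd, by simp only [map_add]; ring⟩
  neg_mem' := by
    rintro x ⟨a, b, hb, rfl⟩
    exact ⟨-a, -b, I.neg_mem hb, by simp only [map_neg]; ring⟩
  mul_mem' := by
    rintro x y ⟨a, b, hb, rfl⟩ ⟨c, d, hd, rfl⟩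
    refine ⟨a * c + b * d * f, a * d + b * c, I.add_mem (I.mul_mem_left a hd) (I.mul_mem_right c hb), ?_⟩
    have hroot : AdjoinRoot.root (X ^ 2 - C f) ^ 2 =
        algebraMap R (AdjoinRoot (X ^ 2 - C f)) f := by
      have h := AdjoinRoot.eval₂_root (X ^ 2 - C f)
      simp only [eval₂_sub, eval₂_pow, eval₂_X, eval₂_C, sub_eq_zero] at h
      exact h
    simp only [map_add, map_mul]
    linear_combination (algebraMap R (AdjoinRoot (X ^ 2 - C f)) b *
      algebraMap R (AdjoinRoot (X ^ 2 - C f)) d) * hroot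

/-- The canonical ring homomorphism `R → S(f)`. -/
noncomputable def toPcc {R : Type*} [CommRing R] (I : Ideal R) (f : R) :
    R →+* pcc I f :=
  (algebraMap R (AdjoinRoot (X ^ 2 - C f))).codRestrict (pcc I f)
    (fun a => ⟨a, 0, I.zero_mem, by simp⟩)

/-- The element `u·t` of `S(f)`, for `u ∈ I`. -/
noncomputable def utElem {R : Type*} [CommRing R] (I : Ideal R) (f : R) (u : R) (hu : u ∈ I) :
    pcc I f :=
  ⟨algebraMap R (AdjoinRoot (X ^ 2 - C f)) u * AdjoinRoot.root (X ^ 2 - C f),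
    0, u, hu, by simp⟩

/-- The bracket power `J^[q]`: the ideal generated by the `q`-th powers of the
elements of `J`. -/
def bracketPow {B : Type*} [CommRing B] (J : Ideal B) (q : ℕ) : Ideal B :=
  Ideal.span ((fun y => y ^ q) '' (J : Set B))

/-- An ideal `J` of a ring of prime characteristic `p` is Frobenius closed if every
`x` with `x^{p^e} ∈ J^[p^e]` for some `e ≥ 0` lies in `J`. -/
def FrobeniusClosed {B : Type*} [CommRing B] (p : ℕ) (J : Ideal B) : Prop :=
  ∀ x : B, (∃ e : ℕ, x ^ p ^ e ∈ bracketPow J (p ^ e)) → x ∈ J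

/-! ### Auxiliary lemmas -/

open RingTheory.Sequence

universe u v

/-- Powers of a weakly regular sequence (with entries in the maximal ideal of a
local ring) are weakly regular. -/
lemma weak_pow {R : Type u} [CommRing R] [IsLocalRing R] (q : ℕ) (hq : 0 < q) :
    ∀ (rs : List R) (M : Type v) [AddCommGroup M] [Module R M] [IsNoetherian R M],
      (∀ r ∈ rs, r ∈ IsLocalRing.maximalIdeal R) → IsWeaklyRegular M rs →
      IsWeaklyRegular M (rs.map (· ^ q))
  | [], M, _, _, _, _, _ => by simp
  | a :: l, M, _, _, _, hmem, h => by
    have hjac : IsLocalRing.maximalIdeal R ≤ (Module.annihilator R M).jacobson :=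
      (IsLocalRing.jacobson_eq_maximalIdeal (⊥ : Ideal R) bot_ne_top) ▸ Ideal.jacobson_mono bot_le
    have h1 : IsWeaklyRegular M (l ++ [a]) :=
      h.of_perm_of_subset_jacobson_annihilator (List.perm_append_singleton a l).symm
        (fun r hr => hjac (hmem r hr))
    rw [isWeaklyRegular_append_iff] at h1
    obtain ⟨hl, ha⟩ := h1
    rw [isWeaklyRegular_singleton_iff] at ha
    have h2 : IsWeaklyRegular M (l ++ [a ^ q]) := by
      rw [isWeaklyRegular_append_iff, isWeaklyRegular_singleton_iff]
      exact ⟨hl, ha.pow q⟩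
    have h3 : IsWeaklyRegular M (a ^ q :: l) :=
      h2.of_perm_of_subset_jacobson_annihilator (List.perm_append_singleton _ l)
        (by
          intro r hr
          rcases List.mem_append.mp hr with hr | hr
          · exact hjac (hmem r (List.mem_cons_of_mem a hr))
          · rw [List.mem_singleton.mp hr]
            exact hjac (Ideal.pow_mem_of_mem _ (hmem a (List.mem_cons_self (a := a) (l := l))) q hq))
    rw [isWeaklyRegular_cons_iff] at h3
    obtain ⟨haq, h4⟩ := h3
    have ih := weak_pow q hq l (QuotSMulTop (a ^ q) M)
      (fun r hr => hmem r (List.mem_cons_of_mem a hr)) h4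
    rw [List.map_cons]
    exact (isWeaklyRegular_cons_iff _ _ _).mpr ⟨haq, ih⟩

/-- For a regular sequence `x, x₂, …, x_d` in a Noetherian local ring, `x^q` is a
nonzerodivisor modulo `(x₂^q, …, x_d^q)`. -/
lemma colon_of_reg {R : Type u} [CommRing R] [IsLocalRing R] [IsNoetherianRing R] {d : ℕ}
    (x : R) (x' : Fin d → R) (hreg : IsRegular R (x :: List.ofFn x'))
    (q : ℕ) (hq : 0 < q) (w : R)
    (hw : x ^ q * w ∈ Ideal.span (Set.range fun i => x' i ^ q)) :
    w ∈ Ideal.span (Set.range fun i => x' i ^ q) := by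
  have hne : Ideal.ofList (x :: List.ofFn x') ≠ ⊤ := by
    intro h
    exact hreg.top_ne_smul (by rw [h, Submodule.top_smul])
  have hmem : ∀ r ∈ (x :: List.ofFn x'), r ∈ IsLocalRing.maximalIdeal R := fun r hr =>
    IsLocalRing.le_maximalIdeal hne (Ideal.subset_span hr)
  have hW : IsWeaklyRegular R (List.ofFn x' ++ [x]) :=
    IsLocalRing.isWeaklyRegular_of_perm_of_subset_maximalIdeal hreg.toIsWeaklyRegular
      (List.perm_append_singleton x _).symm hmem
  have hmem' : ∀ r ∈ (List.ofFn x' ++ [x]), r ∈ IsLocalRing.maximalIdeal R := fun r hr =>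
    hmem r ((List.perm_append_singleton x _).mem_iff.mp hr)
  have hWq := weak_pow q hq (List.ofFn x' ++ [x]) R hmem' hW
  rw [List.map_append, isWeaklyRegular_append_iff] at hWq
  have hsm := hWq.2
  rw [List.map_singleton, isWeaklyRegular_singleton_iff] at hsm
  have hofl : Ideal.ofList ((List.ofFn x').map (· ^ q)) =
      Ideal.span (Set.range fun i => x' i ^ q) := by
    have hset : {r : R | r ∈ (List.ofFn x').map (· ^ q)} = Set.range (fun i => x' i ^ q) := by
      ext r
      simp only [List.mem_map, List.mem_ofFn, Set.mem_setOf_eq, Set.mem_range]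
      constructor
      · rintro ⟨a, ⟨i, rfl⟩, rfl⟩; exact ⟨i, rfl⟩
      · rintro ⟨i, rfl⟩; exact ⟨x' i, ⟨i, rfl⟩, rfl⟩
    exact congrArg Ideal.span hset
  have hmk : ∀ v : R,
      (Submodule.Quotient.mk v :
        R ⧸ (Ideal.ofList ((List.ofFn x').map (· ^ q)) • ⊤ : Submodule R R)) = 0 ↔
      v ∈ Ideal.span (Set.range fun i => x' i ^ q) := by
    intro v
    rw [Submodule.Quotient.mk_eq_zero, hofl, Ideal.smul_eq_mul, Ideal.mul_top]
  have h0 : (x ^ q) • (Submodule.Quotient.mk w :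
      R ⧸ (Ideal.ofList ((List.ofFn x').map (· ^ q)) • ⊤ : Submodule R R)) = (x ^ q) • 0 := by
    rw [smul_zero, ← Submodule.Quotient.mk_smul, smul_eq_mul, hmk]
    exact hw
  exact (hmk w).mp (hsm h0)

/-- If `R/J` has finite length over a local ring `R`, then some power of the maximal
ideal is contained in `J`. -/
lemma max_pow_le {R : Type*} [CommRing R] [IsLocalRing R] (J : Ideal R)
    (hlen : IsFiniteLength R (R ⧸ J)) : ∃ n, IsLocalRing.maximalIdeal R ^ n ≤ J := by
  haveI hart : IsArtinian R (R ⧸ J) := (isFiniteLength_iff_isNoetherian_isArtinian.mp hlen).2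
  haveI : IsArtinianRing (R ⧸ J) := isArtinian_of_tower R hart
  obtain ⟨n, hn⟩ := IsArtinianRing.isNilpotent_jacobson_bot (R := R ⧸ J)
  have hmap : (IsLocalRing.maximalIdeal R).map (Ideal.Quotient.mk J) ≤
      Ideal.jacobson ⊥ := by
    rw [Ideal.jacobson]
    refine le_sInf ?_
    rintro K ⟨-, hK⟩
    haveI := hK
    have hcm : (Ideal.comap (Ideal.Quotient.mk J) K).IsMaximal :=
      Ideal.comap_isMaximal_of_surjective _ Ideal.Quotient.mk_surjective
    have : Ideal.comap (Ideal.Quotient.mk J) K = IsLocalRing.maximalIdeal R :=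
      IsLocalRing.eq_maximalIdeal hcm
    exact Ideal.map_le_iff_le_comap.mpr this.ge
  refine ⟨n, fun w hw => ?_⟩
  have h1 : Ideal.Quotient.mk J w ∈
      (Ideal.map (Ideal.Quotient.mk J) (IsLocalRing.maximalIdeal R)) ^ n := by
    rw [← Ideal.map_pow]
    exact Ideal.mem_map_of_mem _ hw
  have h2 := Ideal.pow_right_mono hmap n h1
  rw [hn] at h2
  exact Ideal.Quotient.eq_zero_iff_mem.mp (by simpa using h2)

/-- Extraction of a socle element: if `m^n·v ⊆ K` but `v ∉ K`, then some multiple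
`c·v` of `v` lies outside `K` and is killed into `K` by the maximal ideal. -/
lemma socle_step {R : Type*} [CommRing R] [IsLocalRing R] (K : Ideal R) :
    ∀ (n : ℕ) (v : R), v ∉ K → (∀ r ∈ IsLocalRing.maximalIdeal R ^ n, r * v ∈ K) →
      ∃ c : R, c * v ∉ K ∧ ∀ r ∈ IsLocalRing.maximalIdeal R, r * (c * v) ∈ K
  | 0, v, hv, hn => absurd (by simpa using hn 1 (by simp)) hv
  | n + 1, v, hv, hn => by
    by_cases hc : ∀ r ∈ IsLocalRing.maximalIdeal R, r * v ∈ K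
    · exact ⟨1, by simpa using hv, fun r hr => by rw [one_mul]; exact hc r hr⟩
    · push_neg at hc
      obtain ⟨r₀, hr₀m, hr₀⟩ := hc
      obtain ⟨c, hc1, hc2⟩ := socle_step K n (r₀ * v) hr₀ (fun r hr => by
        have hm : r * r₀ ∈ IsLocalRing.maximalIdeal R ^ (n + 1) := by
          rw [pow_succ]
          exact Ideal.mul_mem_mul hr hr₀m
        have := hn _ hm
        rwa [mul_assoc] at this)
      refine ⟨c * r₀, by rwa [mul_assoc], fun r hr => ?_⟩
      have := hc2 r hr
      rwa [show r * (c * (r₀ * v)) = r * (c * r₀ * v) by ring] at this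

lemma mem_span_range_mul_iff {R : Type*} [CommRing R] {n : ℕ} (g : Fin n → R) (I : Ideal R)
    (w : R) :
    w ∈ Ideal.span (Set.range g) * I ↔
      ∃ c : Fin n → R, (∀ i, c i ∈ I) ∧ ∑ i, g i * c i = w := by
  constructor
  · intro hw
    refine Submodule.mul_induction_on hw ?_ ?_
    · intro a ha b hb
      obtain ⟨r, hr⟩ := (Submodule.mem_span_range_iff_exists_fun R).mp ha
      refine ⟨fun i => r i * b, fun i => I.mul_mem_left _ hb, ?_⟩
      rw [← hr, Finset.sum_mul]
      exact Finset.sum_congr rfl fun i _ => by rw [smul_eq_mul]; ring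
    · rintro a b ⟨c, hc, hsum⟩ ⟨c', hc', hsum'⟩
      exact ⟨fun i => c i + c' i, fun i => I.add_mem (hc i) (hc' i), by
        simp only [mul_add, Finset.sum_add_distrib, hsum, hsum']⟩
  · rintro ⟨c, hc, rfl⟩
    exact Ideal.sum_mem _ fun i _ =>
      Ideal.mul_mem_mul (Ideal.subset_span ⟨i, rfl⟩) (hc i)

section AuxFrob
variable {R : Type*} [CommRing R] (p : ℕ) [ExpChar R p]

lemma pow_mem_span_range {n : ℕ} (g : Fin n → R) (e : ℕ) (w : R)
    (hw : w ∈ Ideal.span (Set.range g)) :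
    w ^ p ^ e ∈ Ideal.span (Set.range fun i => g i ^ p ^ e) := by
  obtain ⟨c, rfl⟩ := (Submodule.mem_span_range_iff_exists_fun R).mp hw
  rw [sum_pow_char_pow]
  refine Ideal.sum_mem _ fun i _ => ?_
  rw [smul_eq_mul, mul_pow]
  exact Ideal.mul_mem_left _ _ (Ideal.subset_span ⟨i, rfl⟩)

lemma pow_mem_span_range_mul (hp : 0 < p) {n : ℕ} (g : Fin n → R) (I : Ideal R) (e : ℕ) (w : R)
    (hw : w ∈ Ideal.span (Set.range g) * I) :
    w ^ p ^ e ∈ Ideal.span (Set.range fun i => g i ^ p ^ e) * I := by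
  obtain ⟨c, hc, rfl⟩ := (mem_span_range_mul_iff g I _).mp hw
  rw [sum_pow_char_pow]
  refine Ideal.sum_mem _ fun i _ => ?_
  rw [mul_pow]
  exact Ideal.mul_mem_mul (Ideal.subset_span ⟨i, rfl⟩)
    (Ideal.pow_mem_of_mem I (hc i) _ (pow_pos hp e))

end AuxFrob

section AuxA
variable {R : Type*} [CommRing R]

/-- Evaluation of `A = R[T]/(T²−1)` at a square root `r` of `1`. -/
noncomputable def pccEv (r : R) (hr : r * r = 1) :
    AdjoinRoot (X ^ 2 - C (1 : R)) →+* R :=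
  AdjoinRoot.lift (RingHom.id R) r
    (by rw [eval₂_sub, eval₂_pow, eval₂_X, eval₂_C, pow_two, hr]; simp)

@[simp] lemma pccEv_root (r : R) (hr : r * r = 1) :
    pccEv r hr (AdjoinRoot.root (X ^ 2 - C (1 : R))) = r :=
  AdjoinRoot.lift_root _

@[simp] lemma pccEv_of (r : R) (hr : r * r = 1) (a : R) :
    pccEv r hr (AdjoinRoot.of (X ^ 2 - C (1 : R)) a) = a :=
  AdjoinRoot.lift_of _

@[simp] lemma pccEv_alg (r : R) (hr : r * r = 1) (a : R) :
    pccEv r hr (algebraMap R (AdjoinRoot (X ^ 2 - C (1 : R))) a) = a := by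
  rw [AdjoinRoot.algebraMap_eq]; exact AdjoinRoot.lift_of _

lemma isUnit_two_of_charP (p : ℕ) (hp : p.Prime) (hp2 : 2 < p) [CharP R p] :
    IsUnit (2 : R) := by
  have hndvd : ¬ (2 ∣ p) := by
    intro h
    have := (Nat.prime_dvd_prime_iff_eq Nat.prime_two hp).mp h
    omega
  have hcop : Nat.Coprime 2 p := (Nat.Prime.coprime_iff_not_dvd Nat.prime_two).mpr hndvd
  obtain ⟨a, b, hab⟩ := Nat.isCoprime_iff_coprime.mpr hcop
  refine IsUnit.of_mul_eq_one (a := (2 : R)) (a : R) ?_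
  have h := congrArg (fun n : ℤ => (n : R)) hab
  push_cast at h
  rw [CharP.cast_eq_zero R p] at h
  linear_combination h

/-- Uniqueness of the coordinates `a + b·t` in `R[T]/(T²−1)` when `2` is invertible. -/
lemma pcc_coords (p : ℕ) (hp : p.Prime) (hp2 : 2 < p) [CharP R p] (a b a' b' : R)
    (h : algebraMap R (AdjoinRoot (X ^ 2 - C (1 : R))) a +
        algebraMap R (AdjoinRoot (X ^ 2 - C (1 : R))) b * AdjoinRoot.root (X ^ 2 - C (1 : R)) =
        algebraMap R (AdjoinRoot (X ^ 2 - C (1 : R))) a' +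
        algebraMap R (AdjoinRoot (X ^ 2 - C (1 : R))) b' * AdjoinRoot.root (X ^ 2 - C (1 : R))) :
    a = a' ∧ b = b' := by
  have h1 := congrArg (pccEv 1 (by ring)) h
  have h2 := congrArg (pccEv (-1) (by ring)) h
  simp only [map_add, map_mul, pccEv_alg, pccEv_root, mul_one] at h1 h2
  obtain ⟨c, hc⟩ := (isUnit_two_of_charP p hp hp2 (R := R)).exists_left_inv
  constructor
  · linear_combination c * h1 + c * h2 - (a - a') * hc
  · linear_combination c * h1 - c * h2 - (b - b') * hc

lemma pcc_root_sq : (AdjoinRoot.root (X ^ 2 - C (1 : R))) ^ 2 = 1 := by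
  have h := AdjoinRoot.eval₂_root (X ^ 2 - C (1 : R))
  simp only [eval₂_sub, eval₂_pow, eval₂_X, eval₂_C, sub_eq_zero] at h
  rw [h]; simp

lemma pcc_root_pow_odd (q : ℕ) (hq : Odd q) :
    (AdjoinRoot.root (X ^ 2 - C (1 : R))) ^ q = AdjoinRoot.root (X ^ 2 - C (1 : R)) := by
  obtain ⟨k, rfl⟩ := hq
  rw [pow_add, pow_mul, pcc_root_sq, one_pow, pow_one, one_mul]

lemma pcc_alg_injective : Function.Injective (algebraMap R (AdjoinRoot (X ^ 2 - C (1 : R)))) :=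
  fun r s h => by simpa using congrArg (pccEv 1 (by ring : (1 : R) * 1 = 1)) h

lemma mem_pcc_iff {I : Ideal R} {f : R} (v : AdjoinRoot (X ^ 2 - C f)) :
    v ∈ pcc I f ↔ v ∈ pccSet I f := Iff.rfl

@[simp] lemma toPcc_coe (I : Ideal R) (f r : R) :
    ((toPcc I f r : pcc I f) : AdjoinRoot (X ^ 2 - C f)) =
      algebraMap R (AdjoinRoot (X ^ 2 - C f)) r := rfl

end AuxA

set_option maxHeartbeats 1000000 in
/-- Under the hypotheses of the main theorem (`p > 2`, `R` Noetherian
local of characteristic `p`, `x ∈ I` a nonzerodivisor completed to a regular sequence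
`x, x₂, …, x_d` with `R/J` of finite length, `u = x·z mod J·I` a socle generator of
`I/JI` with `I/JI` faithful over `R/J`, and the F-injectivity-type condition (iv) on
`R/I`), the expanded ideal `JS` of the pseudocanonical cover `S = S(1)` is Frobenius
closed. -/
theorem statement13 {R : Type*} [CommRing R] [IsNoetherianRing R] [IsLocalRing R]
    (p : ℕ) (hp : p.Prime) (hp2 : 2 < p) [CharP R p]
    (I : Ideal R) (hI : I ≠ ⊤)
    (x : R) (hxI : x ∈ I) (hxnzd : x ∈ nonZeroDivisors R)
    {d : ℕ} (x' : Fin d → R)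
    (hreg : RingTheory.Sequence.IsRegular R (x :: List.ofFn x'))
    (hlen : IsFiniteLength R (R ⧸ Ideal.span ({x} ∪ Set.range x')))
    (z : R) (hz : z ∉ I + Ideal.span (Set.range x'))
    (u : R) (hu : u ∈ I)
    (huz : u - x * z ∈ Ideal.span ({x} ∪ Set.range x') * I)
    (h1 : ∀ r ∈ IsLocalRing.maximalIdeal R,
      r * u ∈ Ideal.span ({x} ∪ Set.range x') * I)
    (h2 : ∀ b ∈ I,
      (∀ r ∈ IsLocalRing.maximalIdeal R,
        r * b ∈ Ideal.span ({x} ∪ Set.range x') * I) →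
      b ∈ Ideal.span {u} + Ideal.span ({x} ∪ Set.range x') * I)
    (h3 : ∀ a : R,
      (∀ b ∈ I, a * b ∈ Ideal.span ({x} ∪ Set.range x') * I) →
      a ∈ Ideal.span ({x} ∪ Set.range x'))
    (h4 : ∀ (w : R) (e : ℕ),
      w ^ p ^ e ∈ I + Ideal.span (Set.range fun i => x' i ^ p ^ e) →
      w ∈ I + Ideal.span (Set.range x')) :
    FrobeniusClosed p
      ((Ideal.span ({x} ∪ Set.range x')).map (toPcc I (1 : R))) := by
  classical
  haveI := Fact.mk hp
  haveI : CharP (AdjoinRoot (X ^ 2 - C (1 : R))) p :=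
    charP_of_injective_ringHom pcc_alg_injective p
  intro s hs
  obtain ⟨e, hse⟩ := hs
  have hq0 : 0 < p ^ e := pow_pos hp.pos e
  have hqodd : Odd (p ^ e) := (hp.odd_of_ne_two (by omega)).pow
  have hymem : ∀ i : Fin (d + 1), (Fin.cons x x' : Fin (d + 1) → R) i ∈ Ideal.span ({x} ∪ Set.range x') := by
    intro i
    refine Fin.cases ?_ ?_ i
    · exact Ideal.subset_span (Or.inl rfl)
    · intro j
      simp only [Fin.cons_succ]
      exact Ideal.subset_span (Or.inr ⟨j, rfl⟩)
  have hJy : Ideal.span ({x} ∪ Set.range x') =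
      Ideal.span (Set.range (Fin.cons x x' : Fin (d + 1) → R)) := by
    rw [Fin.range_cons, Set.singleton_union]
  obtain ⟨n, hn⟩ := max_pow_le (Ideal.span ({x} ∪ Set.range x')) hlen
  -- Claim B : elements of `I` whose `q`-th power lies in `J^[q]·I` lie in `J·I`.
  have claimB : ∀ b : R, b ∈ I →
      b ^ p ^ e ∈ Ideal.span (Set.range fun i => (Fin.cons x x' : Fin (d + 1) → R) i ^ p ^ e) * I →
      b ∈ Ideal.span ({x} ∪ Set.range x') * I := by
    intro b hb hbq
    by_contra hK
    have hmb : ∀ r ∈ IsLocalRing.maximalIdeal R ^ n,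
        r * b ∈ Ideal.span ({x} ∪ Set.range x') * I :=
      fun r hr => Ideal.mul_mem_mul (hn hr) hb
    obtain ⟨c, hc1, hc2⟩ := socle_step _ n b hK hmb
    have hcb := h2 (c * b) (I.mul_mem_left c hb) hc2
    rw [Submodule.add_eq_sup] at hcb
    obtain ⟨v, hv, w, hw, hvw⟩ := Submodule.mem_sup.mp hcb
    obtain ⟨r, hr⟩ := Ideal.mem_span_singleton'.mp hv
    by_cases hrm : r ∈ IsLocalRing.maximalIdeal R
    · exact hc1 (by rw [← hvw, ← hr]; exact Ideal.add_mem _ (h1 r hrm) hw)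
    have hru : IsUnit r := by
      simpa [IsLocalRing.mem_maximalIdeal, mem_nonunits_iff, not_not] using hrm
    obtain ⟨ρ, hρ⟩ := hru.exists_left_inv
    have hcbe : c * b = r * u + w := by rw [← hr] at hvw; exact hvw.symm
    have huK : u - (ρ * c) * b ∈ Ideal.span ({x} ∪ Set.range x') * I := by
      have hrw : u - (ρ * c) * b = -(ρ * w) := by
        linear_combination (-ρ) * hcbe + (-u) * hρ
      rw [hrw]
      exact neg_mem (Ideal.mul_mem_left _ _ hw)
    have hJyI : ∀ v : R, v ∈ Ideal.span ({x} ∪ Set.range x') * I →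
        v ^ p ^ e ∈ Ideal.span (Set.range fun i => (Fin.cons x x' : Fin (d + 1) → R) i ^ p ^ e) * I := by
      intro v hv'
      rw [hJy] at hv'
      exact pow_mem_span_range_mul p hp.pos ((Fin.cons x x' : Fin (d + 1) → R)) I e v hv'
    have huq : u ^ p ^ e ∈ Ideal.span (Set.range fun i => (Fin.cons x x' : Fin (d + 1) → R) i ^ p ^ e) * I := by
      have hsplit := add_pow_char_pow (R := R) (p := p) (n := e)
        (x := u - (ρ * c) * b) (y := (ρ * c) * b)
      rw [show u - (ρ * c) * b + (ρ * c) * b = u by ring] at hsplit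
      rw [hsplit, mul_pow]
      exact Ideal.add_mem _ (hJyI _ huK) (Ideal.mul_mem_left _ _ hbq)
    have hxzq : (x * z) ^ p ^ e ∈
        Ideal.span (Set.range fun i => (Fin.cons x x' : Fin (d + 1) → R) i ^ p ^ e) * I := by
      have hsplit := sub_pow_char_pow (R := R) (p := p) (n := e)
        (x := u) (y := u - x * z)
      rw [show u - (u - x * z) = x * z by ring] at hsplit
      rw [hsplit]
      exact Ideal.sub_mem _ huq (hJyI _ huz)
    obtain ⟨γ, hγI, hγ⟩ := (mem_span_range_mul_iff _ _ _).mp hxzq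
    rw [Fin.sum_univ_succ] at hγ
    simp only [Fin.cons_zero, Fin.cons_succ] at hγ
    rw [mul_pow] at hγ
    have hx0 : x ^ p ^ e * (z ^ p ^ e - γ 0) ∈
        Ideal.span (Set.range fun i => x' i ^ p ^ e) := by
      have hx0' : x ^ p ^ e * (z ^ p ^ e - γ 0) = ∑ i : Fin d, x' i ^ p ^ e * γ i.succ := by
        linear_combination -hγ
      rw [hx0']
      exact Ideal.sum_mem _ fun i _ => Ideal.mul_mem_right _ _ (Ideal.subset_span ⟨i, rfl⟩)
    have hz' := colon_of_reg x x' hreg (p ^ e) hq0 _ hx0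
    have hz2 : z ^ p ^ e ∈ I + Ideal.span (Set.range fun i => x' i ^ p ^ e) := by
      rw [Submodule.add_eq_sup, show z ^ p ^ e = γ 0 + (z ^ p ^ e - γ 0) by ring]
      exact Submodule.add_mem_sup (hγI 0) hz'
    exact hz (h4 z e hz2)
  -- Claim A : elements whose `q`-th power lies in `J^[q]` lie in `J`.
  have claimA : ∀ a : R,
      a ^ p ^ e ∈ Ideal.span (Set.range fun i => (Fin.cons x x' : Fin (d + 1) → R) i ^ p ^ e) →
      a ∈ Ideal.span ({x} ∪ Set.range x') := by
    intro a haq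
    obtain ⟨r, hr⟩ := (Submodule.mem_span_range_iff_exists_fun R).mp haq
    have haI : a ^ p ^ e ∈ I + Ideal.span (Set.range fun i => x' i ^ p ^ e) := by
      rw [Submodule.add_eq_sup, ← hr, Fin.sum_univ_succ]
      simp only [Fin.cons_zero, Fin.cons_succ, smul_eq_mul]
      refine Submodule.add_mem_sup (I.mul_mem_left _ (Ideal.pow_mem_of_mem I hxI _ hq0)) ?_
      exact Ideal.sum_mem _ fun i _ => Ideal.mul_mem_left _ _ (Ideal.subset_span ⟨i, rfl⟩)
    have haI2 := h4 a e haI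
    rw [Submodule.add_eq_sup] at haI2
    obtain ⟨b₀, hb₀, g, hg, hbg⟩ := Submodule.mem_sup.mp haI2
    have hle : Ideal.span (Set.range fun i => x' i ^ p ^ e) ≤
        Ideal.span (Set.range fun i => (Fin.cons x x' : Fin (d + 1) → R) i ^ p ^ e) := by
      refine Ideal.span_mono ?_
      rintro _ ⟨i, rfl⟩
      exact ⟨i.succ, by simp⟩
    have hb₀q : b₀ ^ p ^ e ∈ Ideal.span (Set.range fun i => (Fin.cons x x' : Fin (d + 1) → R) i ^ p ^ e) := by
      have hb0 : b₀ = a - g := by rw [← hbg]; ring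
      have hgq : g ^ p ^ e ∈ Ideal.span (Set.range fun i => (Fin.cons x x' : Fin (d + 1) → R) i ^ p ^ e) :=
        hle (pow_mem_span_range p x' e g hg)
      rw [hb0, sub_pow_char_pow]
      exact Ideal.sub_mem _ haq hgq
    have hb₀J : b₀ ∈ Ideal.span ({x} ∪ Set.range x') := by
      refine h3 b₀ (fun cI hcI => claimB (b₀ * cI) (I.mul_mem_left b₀ hcI) ?_)
      rw [mul_pow]
      exact Ideal.mul_mem_mul hb₀q (Ideal.pow_mem_of_mem I hcI _ hq0)
    rw [← hbg]
    refine Ideal.add_mem _ hb₀J (Ideal.span_mono ?_ hg)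
    exact Set.subset_union_right
  -- Reduce the bracket power of `JS` to the span of `q`-th powers of generators.
  have hbr : bracketPow ((Ideal.span ({x} ∪ Set.range x')).map (toPcc I (1 : R))) (p ^ e) ≤
      Ideal.span (Set.range fun i => toPcc I (1 : R) ((Fin.cons x x' : Fin (d + 1) → R) i ^ p ^ e)) := by
    rw [bracketPow]
    refine Ideal.span_le.mpr ?_
    rintro _ ⟨v, hv, rfl⟩
    have hmapeq : (Ideal.span ({x} ∪ Set.range x')).map (toPcc I (1 : R)) =
        Ideal.span (Set.range fun i => toPcc I (1 : R) ((Fin.cons x x' : Fin (d + 1) → R) i)) := by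
      rw [hJy, Ideal.map_span, ← Set.range_comp]
      rfl
    rw [hmapeq] at hv
    obtain ⟨c, hc⟩ := (Submodule.mem_span_range_iff_exists_fun _).mp hv
    simp only [SetLike.mem_coe]
    show v ^ p ^ e ∈ _
    rw [← hc, sum_pow_char_pow]
    refine Ideal.sum_mem _ fun i _ => ?_
    rw [smul_eq_mul, mul_pow, ← map_pow]
    exact Ideal.mul_mem_left _ _ (Ideal.subset_span ⟨i, rfl⟩)
  have hs' := hbr hse
  obtain ⟨cS, hcS⟩ := (Submodule.mem_span_range_iff_exists_fun _).mp hs'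
  choose α β hβ hcoe using fun i => (mem_pcc_iff _).mp (cS i).2
  obtain ⟨a, b, hbI, hsa⟩ := (mem_pcc_iff _).mp s.2
  -- Push the relation down to `A` and compare coordinates.
  have h1' : ∀ i : Fin (d + 1),
      ((pcc I (1 : R)).subtype) (cS i • toPcc I (1 : R) ((Fin.cons x x' : Fin (d + 1) → R) i ^ p ^ e)) =
      algebraMap R (AdjoinRoot (X ^ 2 - C (1 : R))) (α i * (Fin.cons x x' : Fin (d + 1) → R) i ^ p ^ e) +
      algebraMap R (AdjoinRoot (X ^ 2 - C (1 : R))) (β i * (Fin.cons x x' : Fin (d + 1) → R) i ^ p ^ e) *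
        AdjoinRoot.root (X ^ 2 - C (1 : R)) := by
    intro i
    rw [smul_eq_mul, map_mul]
    have hc2 : ((pcc I (1 : R)).subtype) (toPcc I (1 : R) ((Fin.cons x x' : Fin (d + 1) → R) i ^ p ^ e)) =
        algebraMap R (AdjoinRoot (X ^ 2 - C (1 : R))) ((Fin.cons x x' : Fin (d + 1) → R) i ^ p ^ e) := rfl
    have hc1 : ((pcc I (1 : R)).subtype) (cS i) =
        algebraMap R (AdjoinRoot (X ^ 2 - C (1 : R))) (α i) +
        algebraMap R (AdjoinRoot (X ^ 2 - C (1 : R))) (β i) *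
          AdjoinRoot.root (X ^ 2 - C (1 : R)) := hcoe i
    rw [hc1, hc2, map_mul, map_mul]
    ring
  have hAeq := congrArg ((pcc I (1 : R)).subtype) hcS
  rw [map_sum, map_pow] at hAeq
  simp only [h1'] at hAeq
  rw [Finset.sum_add_distrib, ← Finset.sum_mul, ← map_sum, ← map_sum] at hAeq
  have hsub : ((pcc I (1 : R)).subtype) s =
      algebraMap R (AdjoinRoot (X ^ 2 - C (1 : R))) a +
      algebraMap R (AdjoinRoot (X ^ 2 - C (1 : R))) b *
        AdjoinRoot.root (X ^ 2 - C (1 : R)) := hsa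
  rw [hsub, add_pow_char_pow, mul_pow, pcc_root_pow_odd _ hqodd, ← map_pow, ← map_pow] at hAeq
  obtain ⟨hA1, hB1⟩ := pcc_coords p hp hp2 _ _ _ _ hAeq
  -- Conclude membership of the coordinates.
  have haJ : a ∈ Ideal.span ({x} ∪ Set.range x') := by
    refine claimA a ?_
    rw [← hA1]
    exact Ideal.sum_mem _ fun i _ => Ideal.mul_mem_left _ _ (Ideal.subset_span ⟨i, rfl⟩)
  have hbK : b ∈ Ideal.span ({x} ∪ Set.range x') * I := by
    refine claimB b hbI ?_
    refine (mem_span_range_mul_iff _ _ _).mpr ⟨β, hβ, ?_⟩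
    rw [← hB1]
    exact Finset.sum_congr rfl fun i _ => mul_comm _ _
  -- Assemble `s` as an element of `JS`.
  rw [hJy] at hbK
  obtain ⟨cb, hcbI, hcb⟩ := (mem_span_range_mul_iff _ _ _).mp hbK
  set w : Fin (d + 1) → pcc I (1 : R) := fun i =>
    ⟨algebraMap R (AdjoinRoot (X ^ 2 - C (1 : R))) (cb i) *
      AdjoinRoot.root (X ^ 2 - C (1 : R)), 0, cb i, hcbI i, by simp⟩ with hwdef
  have hsum : s = toPcc I (1 : R) a + ∑ i, toPcc I (1 : R) ((Fin.cons x x' : Fin (d + 1) → R) i) * w i := by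
    apply Subtype.ext
    have hRHS : (((toPcc I (1 : R) a + ∑ i, toPcc I (1 : R) ((Fin.cons x x' : Fin (d + 1) → R) i) * w i) :
        pcc I (1 : R)) : AdjoinRoot (X ^ 2 - C (1 : R))) =
        algebraMap R (AdjoinRoot (X ^ 2 - C (1 : R))) a +
        (∑ i, algebraMap R (AdjoinRoot (X ^ 2 - C (1 : R))) ((Fin.cons x x' : Fin (d + 1) → R) i * cb i)) *
          AdjoinRoot.root (X ^ 2 - C (1 : R)) := by
      push_cast
      rw [Finset.sum_mul]
      congr 1
      refine Finset.sum_congr rfl fun i _ => ?_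
      simp only [toPcc_coe, map_mul]
      ring
    rw [hRHS, ← map_sum, hcb]
    exact hsa
  rw [hsum]
  refine Ideal.add_mem _ (Ideal.mem_map_of_mem _ haJ) (Ideal.sum_mem _ fun i _ => ?_)
  exact Ideal.mul_mem_right _ _ (Ideal.mem_map_of_mem _ (hymem i))
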